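/- Let R be a ring, σ an endomorphism of R, and S = R[t;σ]/(t²). If (0,a) (i.e., the element at) is left morphic in S, then a is von Neumann regular in R. -/

import Mathlib

/-- `R[t;σ]/(t²)`, the trivial extension `R ⋉ R(σ)`: pairs `(a, m)` with
multiplication `(a,m)(b,n) = (ab, an + mσ(b))`. -/
def SkewTriv (R : Type*) [Ring R] (σ : R →+* R) : Type _ := R × R

namespace SkewTriv

variable {R : Type*} [Ring R] {σ : R →+* R}

/-- The element `(a, m)` of `SkewTriv R σ`. -/
def mk (σ : R →+* R) (a m : R) : SkewTriv R σ := (a, m)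

instance : AddCommGroup (SkewTriv R σ) := inferInstanceAs (AddCommGroup (R × R))

instance : Mul (SkewTriv R σ) :=
  ⟨fun x y => mk σ (x.1 * y.1) (x.1 * y.2 + x.2 * σ y.1)⟩

instance : One (SkewTriv R σ) := ⟨mk σ 1 0⟩

theorem one_def : (1 : SkewTriv R σ) = mk σ 1 0 := rfl

theorem zero_def : (0 : SkewTriv R σ) = mk σ 0 0 := rfl

theorem mul_def (x y : SkewTriv R σ) :
    x * y = mk σ (x.1 * y.1) (x.1 * y.2 + x.2 * σ y.1) := rfl

theorem add_def (x y : SkewTriv R σ) :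
    x + y = mk σ (x.1 + y.1) (x.2 + y.2) := rfl

instance : Ring (SkewTriv R σ) :=
  { (instAddCommGroup : AddCommGroup (SkewTriv R σ)), (instMul : Mul (SkewTriv R σ)),
      (instOne : One (SkewTriv R σ)) with
    mul_assoc := by
      rintro ⟨a, m⟩ ⟨b, n⟩ ⟨c, p⟩
      (repeat erw [mul_def]); (repeat erw [add_def])
      apply Prod.ext <;>
        simp [mul_def, mk, mul_assoc, mul_add, add_mul, map_mul, add_assoc]
    one_mul := by
      rintro ⟨a, m⟩
      (repeat erw [one_def]); (repeat erw [mul_def])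
      apply Prod.ext <;> simp [mul_def, one_def, mk]
    mul_one := by
      rintro ⟨a, m⟩
      (repeat erw [one_def]); (repeat erw [mul_def])
      apply Prod.ext <;> simp [mul_def, one_def, mk]
    left_distrib := by
      rintro ⟨a, m⟩ ⟨b, n⟩ ⟨c, p⟩
      (repeat erw [mul_def]); (repeat erw [add_def])
      apply Prod.ext <;>
        simp [mul_def, add_def, mk, mul_add, add_mul, map_add] <;> abel
    right_distrib := by
      rintro ⟨a, m⟩ ⟨b, n⟩ ⟨c, p⟩
      (repeat erw [mul_def]); (repeat erw [add_def])
      apply Prod.ext <;>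
        simp [mul_def, add_def, mk, mul_add, add_mul, map_add] <;> abel
    zero_mul := by
      rintro ⟨a, m⟩
      (repeat erw [zero_def]); (repeat erw [mul_def])
      apply Prod.ext <;> simp [mul_def, zero_def, mk]
    mul_zero := by
      rintro ⟨a, m⟩
      (repeat erw [zero_def]); (repeat erw [mul_def])
      apply Prod.ext <;> simp [mul_def, zero_def, mk] }

end SkewTriv

/-- A ring `S` is left morphic at `x` if there is `y` with `ann_l(x) = Sy` and
`ann_l(y) = Sx`. -/
def IsLeftMorphicElem {S : Type*} [Ring S] (x : S) : Prop :=
  ∃ y : S, ({z : S | z * x = 0} = {z : S | ∃ w, z = w * y}) ∧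
    ({z : S | z * y = 0} = {z : S | ∃ w, z = w * x})

/-- If `(0,a)` (the element `at`) is left morphic in `R[t;σ]/(t²)`, then `a` is
von Neumann regular in `R`. -/
theorem stmt6 {R : Type*} [Ring R] (σ : R →+* R) (a : R)
    (h : IsLeftMorphicElem (SkewTriv.mk σ 0 a)) :
    ∃ x : R, a = a * x * a := by
  obtain ⟨y, h1, h2⟩ := h
  obtain ⟨b, c⟩ := y
  have h1' := Set.ext_iff.mp h1
  have h2' := Set.ext_iff.mp h2
  simp only [Set.mem_setOf_eq] at h1' h2'
  -- P1 : a * σ b = 0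
  have P1 : a * σ b = 0 := by
    have hmem : SkewTriv.mk σ 0 a * SkewTriv.mk σ b c = 0 :=
      (h2' (SkewTriv.mk σ 0 a)).mpr ⟨1, (one_mul _).symm⟩
    have := congrArg Prod.snd hmem
    erw [SkewTriv.mul_def] at this
    simpa [SkewTriv.mul_def, SkewTriv.mk, SkewTriv.zero_def] using this
  -- P3 : (0,1) ∈ ann (0,a) = S(b,c)
  have hz : SkewTriv.mk σ 0 1 * SkewTriv.mk σ 0 a = 0 := by
    apply Prod.ext <;> erw [SkewTriv.mul_def] <;> simp [SkewTriv.mul_def, SkewTriv.mk, SkewTriv.zero_def]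
  obtain ⟨⟨w1, u⟩, hw⟩ := (h1' (SkewTriv.mk σ 0 1)).mp hz
  have hb : (0 : R) = w1 * b := congrArg Prod.fst hw
  have hc : (1 : R) = w1 * c + u * σ b := congrArg Prod.snd hw
  -- σ b * w1 = 0
  have key : σ b * w1 = 0 := by
    have hz0 : SkewTriv.mk σ (σ b * w1) (σ b * u - 1) * SkewTriv.mk σ b c = 0 := by
      apply Prod.ext
      · show σ b * w1 * b = 0
        rw [mul_assoc, ← hb, mul_zero]
      · show σ b * w1 * c + (σ b * u - 1) * σ b = 0
        have h' : σ b * (w1 * c + u * σ b) = σ b := by rw [← hc, mul_one]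
        rw [mul_add, ← mul_assoc, ← mul_assoc] at h'
        rw [sub_mul, one_mul, ← add_sub_assoc, h', sub_self]
    obtain ⟨w', hw'⟩ := (h2' _).mp hz0
    have := congrArg Prod.fst hw'
    erw [SkewTriv.mul_def] at this
    simpa [SkewTriv.mul_def, SkewTriv.mk] using this
  -- σ b * u * σ b = σ b
  have hsb : σ b * u * σ b = σ b := by
    have : σ b * (w1 * c + u * σ b) = σ b := by rw [← hc, mul_one]
    rw [mul_add, ← mul_assoc, key, zero_mul, zero_add, ← mul_assoc] at this
    exact this
  -- 1 - σ b * u = x * a for some x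
  have hz1 : SkewTriv.mk σ 0 (1 - σ b * u) * SkewTriv.mk σ b c = 0 := by
    apply Prod.ext
    · show (0 : R) * b = 0
      rw [zero_mul]
    · show (0 : R) * c + (1 - σ b * u) * σ b = 0
      rw [zero_mul, zero_add, sub_mul, one_mul, hsb, sub_self]
  obtain ⟨w'', hw''⟩ := (h2' _).mp hz1
  have hx : 1 - σ b * u = w''.1 * a := by
    have := congrArg Prod.snd hw''
    erw [SkewTriv.mul_def] at this
    simpa [SkewTriv.mul_def, SkewTriv.mk] using this
  refine ⟨w''.1, ?_⟩
  have : a * (1 - σ b * u) = a * (w''.1 * a) := by rw [hx]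
  rw [mul_sub, mul_one, ← mul_assoc, P1, zero_mul, sub_zero] at this
  rw [← mul_assoc] at this
  exact this
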